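/- Let (Z_n) be a Galton-Watson process with Z_0 = 1, offspring minimum μ ≥ 2 (i.e. p_j = 0 for j < μ and p_μ > 0). Then P(Z_n = μ^n + 1) = p_μ^{-1} p_{μ+1} μ^{n-1} P(Z_n = μ^n) for all n ≥ 1. -/

import Mathlib

open MeasureTheory ProbabilityTheory

/-- Let `(Z_n)` be a Galton-Watson process with `Z_0 = 1` and offspring minimum `μ ≥ 2`
(i.e. `p_j = 0` for `j < μ` and `p_μ > 0`).  Then
`P(Z_n = μ^n + 1) = p_μ⁻¹ p_{μ+1} μ^{n-1} P(Z_n = μ^n)` for all `n ≥ 1`. -/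
theorem GW_minimal_path_plus_one {Ω : Type*} [MeasurableSpace Ω]
    (P : Measure Ω) [IsProbabilityMeasure P]
    (p : ℕ → ℝ) (hp_nonneg : ∀ j, 0 ≤ p j) (hp_sum : ∑' j, p j = 1)
    (μ : ℕ) (hμ : 2 ≤ μ) (hp_below : ∀ j, j < μ → p j = 0) (hpμ : 0 < p μ)
    (ξ : ℕ × ℕ → Ω → ℕ) (hξ_meas : ∀ ni, Measurable (ξ ni))
    (hξ_indep : iIndepFun ξ P)
    (hξ_law : ∀ ni : ℕ × ℕ, ∀ j : ℕ, (P {ω | ξ ni ω = j}).toReal = p j)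
    (Z : ℕ → Ω → ℕ) (hZ0 : ∀ ω, Z 0 ω = 1)
    (hZrec : ∀ n ω, Z (n + 1) ω = ∑ i ∈ Finset.range (Z n ω), ξ (n, i) ω) :
    ∀ n : ℕ, 1 ≤ n →
      (P {ω | Z n ω = μ ^ n + 1}).toReal
        = (p μ)⁻¹ * p (μ + 1) * (μ : ℝ) ^ (n - 1) * (P {ω | Z n ω = μ ^ n}).toReal := by
  intro n hn
  obtain ⟨m, rfl⟩ : ∃ m, n = m + 1 := ⟨n - 1, by omega⟩
  simp only [Nat.add_sub_cancel]
  classical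
  set q := μ ^ m with hq
  have hq1 : 1 ≤ q := Nat.one_le_pow _ _ (by omega)
  have hqμ : μ ^ (m + 1) = q * μ := pow_succ μ m
  -- null events below μ
  have hnull : ∀ (c : ℕ × ℕ) (j : ℕ), j < μ → P {ω | ξ c ω = j} = 0 := by
    intro c j hj
    have h0 : (P {ω | ξ c ω = j}).toReal = 0 := by rw [hξ_law]; exact hp_below j hj
    have hfin : P {ω | ξ c ω = j} ≠ ⊤ := measure_ne_top _ _
    rcases (ENNReal.toReal_eq_zero_iff _).1 h0 with h | h
    · exact h
    · exact absurd h hfin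
  -- almost surely all offspring counts are ≥ μ
  have hG : ∀ᵐ ω ∂P, ∀ c : ℕ × ℕ, μ ≤ ξ c ω := by
    rw [ae_all_iff]
    intro c
    rw [ae_iff]
    have hsub : {ω | ¬ μ ≤ ξ c ω} ⊆ ⋃ j ∈ (Finset.range μ : Set ℕ), {ω | ξ c ω = j} := by
      intro ω hω
      simp only [Set.mem_setOf_eq, not_le] at hω
      exact Set.mem_biUnion (by simpa using hω) rfl
    refine measure_mono_null hsub ?_
    rw [measure_biUnion_null_iff (Finset.range μ).countable_toSet]
    intro j hj
    exact hnull c j (by simpa using hj)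
  -- pointwise: lower bound on Z
  have hlow : ∀ ω, (∀ c : ℕ × ℕ, μ ≤ ξ c ω) → ∀ N, μ ^ N ≤ Z N ω := by
    intro ω hω N
    induction N with
    | zero => simp [hZ0]
    | succ N ih =>
      rw [hZrec]
      calc μ ^ (N + 1) = μ ^ N * μ := pow_succ μ N
        _ ≤ Z N ω * μ := Nat.mul_le_mul_right _ ih
        _ = ∑ _i ∈ Finset.range (Z N ω), μ := by
            rw [Finset.sum_const, Finset.card_range, smul_eq_mul]
        _ ≤ ∑ i ∈ Finset.range (Z N ω), ξ (N, i) ω :=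
            Finset.sum_le_sum fun i _ => hω (N, i)
  -- pointwise characterization of the minimal path
  have key1 : ∀ ω, (∀ c : ℕ × ℕ, μ ≤ ξ c ω) → ∀ N,
      (Z N ω = μ ^ N ↔ ∀ k < N, ∀ i < μ ^ k, ξ (k, i) ω = μ) := by
    intro ω hω N
    induction N with
    | zero => simp [hZ0]
    | succ N ih =>
      constructor
      · intro h
        have hZN : Z N ω = μ ^ N := by
          have h1 : μ ^ N ≤ Z N ω := hlow ω hω N
          have h2 : Z N ω * μ ≤ μ ^ (N + 1) := by
            calc Z N ω * μ = ∑ _i ∈ Finset.range (Z N ω), μ := by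
                  rw [Finset.sum_const, Finset.card_range, smul_eq_mul]
              _ ≤ ∑ i ∈ Finset.range (Z N ω), ξ (N, i) ω :=
                  Finset.sum_le_sum fun i _ => hω (N, i)
              _ = μ ^ (N + 1) := by rw [← hZrec, h]
          have h3 : Z N ω * μ ≤ μ ^ N * μ := by rw [pow_succ] at h2; exact h2
          exact le_antisymm (Nat.le_of_mul_le_mul_right h3 (by omega)) h1
        have hrow : ∀ i ∈ Finset.range (μ ^ N), μ = ξ (N, i) ω := by
          have hsum : ∑ _i ∈ Finset.range (μ ^ N), μ
              = ∑ i ∈ Finset.range (μ ^ N), ξ (N, i) ω := by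
            rw [Finset.sum_const, Finset.card_range, smul_eq_mul, ← pow_succ, ← h,
              hZrec, hZN]
          exact (Finset.sum_eq_sum_iff_of_le fun i _ => hω (N, i)).1 hsum
        intro k hk i hi
        rcases Nat.lt_succ_iff_lt_or_eq.1 hk with hk' | rfl
        · exact (ih.1 hZN) k hk' i hi
        · exact (hrow i (Finset.mem_range.2 hi)).symm
      · intro h
        have hZN : Z N ω = μ ^ N := ih.2 fun k hk i hi => h k (by omega) i hi
        rw [hZrec, hZN]
        calc ∑ i ∈ Finset.range (μ ^ N), ξ (N, i) ω
            = ∑ _i ∈ Finset.range (μ ^ N), μ :=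
              Finset.sum_congr rfl fun i hi =>
                h N (Nat.lt_succ_self N) i (Finset.mem_range.1 hi)
          _ = μ ^ (N + 1) := by
              rw [Finset.sum_const, Finset.card_range, smul_eq_mul, ← pow_succ]
  -- pointwise characterization of the minimal-plus-one path
  have key2 : ∀ ω, (∀ c : ℕ × ℕ, μ ≤ ξ c ω) →
      (Z (m + 1) ω = μ ^ (m + 1) + 1 ↔ ∃ j < q, ξ (m, j) ω = μ + 1 ∧
        (∀ i < q, i ≠ j → ξ (m, i) ω = μ) ∧ ∀ k < m, ∀ i < μ ^ k, ξ (k, i) ω = μ) := by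
    intro ω hω
    constructor
    · intro h
      have hsum : ∑ i ∈ Finset.range (Z m ω), ξ (m, i) ω = q * μ + 1 := by
        rw [← hZrec, h, hqμ]
      have hge : Z m ω * μ ≤ q * μ + 1 := by
        calc Z m ω * μ = ∑ _i ∈ Finset.range (Z m ω), μ := by
              rw [Finset.sum_const, Finset.card_range, smul_eq_mul]
          _ ≤ ∑ i ∈ Finset.range (Z m ω), ξ (m, i) ω :=
              Finset.sum_le_sum fun i _ => hω (m, i)
          _ = q * μ + 1 := hsum
      have hlm : q ≤ Z m ω := hlow ω hω m
      have hZm : Z m ω = q := by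
        by_contra hne
        have h1 : q + 1 ≤ Z m ω := by omega
        have h2 : (q + 1) * μ ≤ Z m ω * μ := Nat.mul_le_mul_right _ h1
        have h3 : (q + 1) * μ = q * μ + μ := by ring
        omega
      rw [hZm] at hsum
      -- excess over μ sums to 1
      have hdsum : ∑ i ∈ Finset.range q, (ξ (m, i) ω - μ) = 1 := by
        have : ∑ i ∈ Finset.range q, ξ (m, i) ω
            = ∑ i ∈ Finset.range q, ((ξ (m, i) ω - μ) + μ) :=
          Finset.sum_congr rfl fun i _ => by
            have := hω (m, i); omega
        rw [this, Finset.sum_add_distrib, Finset.sum_const, Finset.card_range,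
          smul_eq_mul] at hsum
        omega
      have hex : ∃ j ∈ Finset.range q, ξ (m, j) ω - μ ≠ 0 := by
        by_contra hc
        push_neg at hc
        rw [Finset.sum_eq_zero hc] at hdsum
        omega
      obtain ⟨j, hjmem, hdj⟩ := hex
      have hsplit : ξ (m, j) ω - μ
          + ∑ i ∈ (Finset.range q).erase j, (ξ (m, i) ω - μ) = 1 := by
        rw [Finset.add_sum_erase _ (fun i => ξ (m, i) ω - μ) hjmem]
        exact hdsum
      have hdj1 : ξ (m, j) ω - μ = 1 ∧
          ∑ i ∈ (Finset.range q).erase j, (ξ (m, i) ω - μ) = 0 := by omega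
      have hrest : ∀ i ∈ (Finset.range q).erase j, ξ (m, i) ω - μ = 0 := by
        rw [← Finset.sum_eq_zero_iff]
        exact hdj1.2
      refine ⟨j, Finset.mem_range.1 hjmem, ?_, ?_, ?_⟩
      · have := hω (m, j); omega
      · intro i hi hij
        have := hrest i (Finset.mem_erase.2 ⟨hij, Finset.mem_range.2 hi⟩)
        have := hω (m, i); omega
      · exact (key1 ω hω m).1 hZm
    · rintro ⟨j, hj, h1, h2, h3⟩
      have hZm : Z m ω = q := (key1 ω hω m).2 h3
      have hjmem : j ∈ Finset.range q := Finset.mem_range.2 hj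
      rw [hZrec, hZm, ← Finset.add_sum_erase _ _ hjmem, h1]
      have hr : ∑ i ∈ (Finset.range q).erase j, ξ (m, i) ω
          = ∑ _i ∈ (Finset.range q).erase j, μ :=
        Finset.sum_congr rfl fun i hi =>
          h2 i (Finset.mem_range.1 (Finset.mem_of_mem_erase hi))
            (Finset.ne_of_mem_erase hi)
      rw [hr, Finset.sum_const, Finset.card_erase_of_mem hjmem, Finset.card_range,
        smul_eq_mul, hqμ]
      have : (q - 1) * μ + μ = q * μ := by
        calc (q - 1) * μ + μ = ((q - 1) + 1) * μ := by ring
          _ = q * μ := by rw [Nat.sub_add_cancel hq1]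
      omega
  -- the index set of relevant offspring variables
  set S : Finset (ℕ × ℕ) :=
    (Finset.range (m + 1)).biUnion
      (fun k => (Finset.range (μ ^ k)).image fun i => (k, i)) with hS
  have hSmem : ∀ c : ℕ × ℕ, c ∈ S ↔ c.1 < m + 1 ∧ c.2 < μ ^ c.1 := by
    intro c
    simp only [hS, Finset.mem_biUnion, Finset.mem_image, Finset.mem_range]
    constructor
    · rintro ⟨k, hk, i, hi, rfl⟩; exact ⟨hk, hi⟩
    · rintro ⟨h1', h2'⟩; exact ⟨c.1, h1', c.2, h2', rfl⟩
  -- product formula from independence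
  have hprodP : ∀ f : ℕ × ℕ → ℕ,
      P (⋂ c ∈ S, {ω | ξ c ω = f c}) = ∏ c ∈ S, P {ω | ξ c ω = f c} := by
    intro f
    exact hξ_indep.meas_biInter fun c _ => ⟨{f c}, measurableSet_singleton _, rfl⟩
  have hprodReal : ∀ f : ℕ × ℕ → ℕ,
      (P (⋂ c ∈ S, {ω | ξ c ω = f c})).toReal = ∏ c ∈ S, p (f c) := by
    intro f
    rw [hprodP f, ENNReal.toReal_prod]
    exact Finset.prod_congr rfl fun c _ => hξ_law c (f c)
  have hmeasE : ∀ f : ℕ × ℕ → ℕ, MeasurableSet (⋂ c ∈ S, {ω | ξ c ω = f c}) :=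
    fun f => S.measurableSet_biInter fun c _ =>
      hξ_meas c (measurableSet_singleton (f c))
  -- the configurations
  set fj : ℕ → ℕ × ℕ → ℕ := fun j c => if c = (m, j) then μ + 1 else μ with hfj
  set E : ℕ → Set Ω := fun j => ⋂ c ∈ S, {ω | ξ c ω = fj j c} with hE
  set A : Set Ω := ⋂ c ∈ S, {ω | ξ c ω = μ} with hA
  -- identify {Z = μ^(m+1)} with A a.e.
  have hAset : P {ω | Z (m + 1) ω = μ ^ (m + 1)} = P A := by
    apply measure_congr
    filter_upwards [hG] with ω hω
    have : Z (m + 1) ω = μ ^ (m + 1) ↔ ω ∈ A := by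
      rw [key1 ω hω (m + 1)]
      simp only [hA, Set.mem_iInter, Set.mem_setOf_eq]
      constructor
      · intro h c hc
        obtain ⟨hc1, hc2⟩ := (hSmem c).1 hc
        have := h c.1 hc1 c.2 hc2
        simpa using this
      · intro h k hk i hi
        exact h (k, i) ((hSmem (k, i)).2 ⟨hk, hi⟩)
    exact eq_iff_iff.2 this
  -- identify {Z = μ^(m+1)+1} with ⋃ j < q, E j a.e.
  have hEset : P {ω | Z (m + 1) ω = μ ^ (m + 1) + 1}
      = P (⋃ j ∈ Finset.range q, E j) := by
    apply measure_congr
    filter_upwards [hG] with ω hω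
    have : Z (m + 1) ω = μ ^ (m + 1) + 1 ↔ ω ∈ ⋃ j ∈ Finset.range q, E j := by
      rw [key2 ω hω]
      simp only [Set.mem_iUnion, Finset.mem_coe, Finset.mem_range, exists_prop,
        hE, Set.mem_iInter, Set.mem_setOf_eq]
      constructor
      · rintro ⟨j, hj, h1, h2, h3⟩
        refine ⟨j, hj, ?_⟩
        intro c hc
        obtain ⟨hc1, hc2⟩ := (hSmem c).1 hc
        by_cases hcm : c = (m, j)
        · rw [hcm] at *
          simp only [hfj, if_pos rfl]
          exact h1
        · simp only [hfj, if_neg hcm]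
          rcases Nat.lt_succ_iff_lt_or_eq.1 hc1 with hlt | heq
          · have := h3 c.1 hlt c.2 hc2
            simpa using this
          · have hc2' : c.2 < q := by rw [hq, ← heq]; exact hc2
            have hne : c.2 ≠ j := by
              intro hcontra
              apply hcm
              rw [← heq, ← hcontra]
            have := h2 c.2 hc2' hne
            rw [← heq] at this
            simpa using this
      · rintro ⟨j, hj, h⟩
        refine ⟨j, hj, ?_, ?_, ?_⟩
        · have hmem : (m, j) ∈ S := (hSmem _).2 ⟨Nat.lt_succ_self m, hj⟩
          have := h (m, j) hmem
          simpa [hfj] using this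
        · intro i hi hij
          have hmem : (m, i) ∈ S := (hSmem _).2 ⟨Nat.lt_succ_self m, hi⟩
          have := h (m, i) hmem
          have hne : (m, i) ≠ (m, j) := by simp [hij]
          simpa [hfj, if_neg hne] using this
        · intro k hk i hi
          have hmem : (k, i) ∈ S := (hSmem _).2 ⟨by omega, hi⟩
          have := h (k, i) hmem
          have hne : (k, i) ≠ (m, j) := by
            intro hcontra
            have : k = m := congrArg Prod.fst hcontra
            omega
          simpa [hfj, if_neg hne] using this
    exact eq_iff_iff.2 this
  -- the events E j are pairwise disjoint
  have hdisj : Set.PairwiseDisjoint (↑(Finset.range q) : Set ℕ) E := by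
    intro j hj j' hj' hne
    simp only [Finset.coe_range, Set.mem_Iio] at hj hj'
    rw [Function.onFun, Set.disjoint_left]
    intro ω hωj hωj'
    simp only [hE, Set.mem_iInter, Set.mem_setOf_eq] at hωj hωj'
    have hmem : (m, j) ∈ S := (hSmem _).2 ⟨Nat.lt_succ_self m, by simpa using hj⟩
    have h1 := hωj (m, j) hmem
    have h2 := hωj' (m, j) hmem
    have hne' : (m, j) ≠ (m, j') := by simp [hne]
    rw [hfj] at h1 h2
    have h1' : ξ (m, j) ω = μ + 1 := by simpa using h1
    have h2' : ξ (m, j) ω = μ := by simpa [hne] using h2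
    omega
  -- measure of each E j
  have hPA : (P A).toReal = ∏ c ∈ S, p μ := hprodReal fun _ => μ
  have hPE : ∀ j < q, (P (E j)).toReal = p (μ + 1) * (p μ)⁻¹ * (P A).toReal := by
    intro j hj
    have hmem : (m, j) ∈ S := (hSmem _).2 ⟨Nat.lt_succ_self m, hj⟩
    have h1 : (P (E j)).toReal = ∏ c ∈ S, p (fj j c) := hprodReal (fj j)
    rw [h1, ← Finset.mul_prod_erase S _ hmem, hPA, ← Finset.mul_prod_erase S _ hmem]
    have h2 : ∏ c ∈ S.erase (m, j), p (fj j c) = ∏ c ∈ S.erase (m, j), p μ :=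
      Finset.prod_congr rfl fun c hc => by
        rw [hfj]; simp only [if_neg (Finset.ne_of_mem_erase hc)]
    rw [h2]
    have h3 : fj j (m, j) = μ + 1 := by rw [hfj]; simp
    rw [h3]
    have hne : p μ ≠ 0 := ne_of_gt hpμ
    field_simp
  -- putting it all together
  have hsum : P (⋃ j ∈ Finset.range q, E j) = ∑ j ∈ Finset.range q, P (E j) :=
    measure_biUnion_finset hdisj fun j _ => hmeasE (fj j)
  rw [hEset, hsum, ENNReal.toReal_sum fun j _ => measure_ne_top _ _, hAset]
  rw [Finset.sum_congr rfl fun j hj => hPE j (Finset.mem_range.1 hj)]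
  rw [Finset.sum_const, Finset.card_range, nsmul_eq_mul]
  push_cast [hq]
  ring
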